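/- Let V be a finite-dimensional real vector space with a Lorentzian symmetric bilinear form B, and let T : V → V be a linear operator that is skew-symmetric with respect to B and nilpotent with T^{m-1} ≠ 0, T^m = 0. Then m ≤ 3; more precisely, setting k = ⌈m/2⌉, the image of T^k is a totally isotropic subspace of V, hence has dimension at most 1. -/

import Mathlib

/-- A symmetric bilinear form is Lorentzian: nondegenerate, symmetric, admits a timelike
vector, and every subspace on which it is negative definite has dimension at most 1
(i.e. it has index 1). -/
def IsLorentzian {V : Type*} [AddCommGroup V] [Module ℝ V]
    (B : LinearMap.BilinForm ℝ V) : Prop :=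
  B.Nondegenerate ∧ (∀ x y : V, B x y = B y x) ∧ (∃ x : V, B x x < 0) ∧
    ∀ W : Submodule ℝ V, (∀ w ∈ W, w ≠ 0 → B w w < 0) → Module.finrank ℝ W ≤ 1

/-- Skew-symmetry iterated: `B (T^n x) y = (-1)^n B x (T^n y)`. -/
lemma skew_pow_aux {V : Type*} [AddCommGroup V] [Module ℝ V]
    (B : LinearMap.BilinForm ℝ V) (T : V →ₗ[ℝ] V)
    (hskew : ∀ x y : V, B (T x) y = - B x (T y)) :
    ∀ n x y, B ((T ^ n) x) y = (-1 : ℝ) ^ n * B x ((T ^ n) y) := by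
  intro n
  induction n with
  | zero => simp
  | succ n ih =>
    intro x y
    have h1 : (T ^ (n + 1)) x = T ((T ^ n) x) := by
      rw [pow_succ', Module.End.mul_apply]
    have h2 : (T ^ (n + 1)) y = (T ^ n) (T y) := by
      rw [pow_succ, Module.End.mul_apply]
    rw [h1, hskew, ih _ (T y), h2, pow_succ]
    ring

/-- On a Lorentzian space the orthogonal complement of a timelike vector is
positive semidefinite. -/
lemma perp_nonneg_aux {V : Type*} [AddCommGroup V] [Module ℝ V] [FiniteDimensional ℝ V]
    (B : LinearMap.BilinForm ℝ V) (hB : IsLorentzian B)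
    (z : V) (hz : B z z < 0) :
    ∀ y : V, B z y = 0 → 0 ≤ B y y := by
  obtain ⟨hnd, hsym, -, hidx⟩ := hB
  intro y hzy
  by_contra hneg
  push_neg at hneg
  have hy0 : y ≠ 0 := by rintro rfl; simp at hneg
  have hz0 : z ≠ 0 := by rintro rfl; simp at hz
  set W : Submodule ℝ V := Submodule.span ℝ {z, y} with hW
  have hWneg : ∀ w ∈ W, w ≠ 0 → B w w < 0 := by
    intro w hw hwne
    have : ∃ a b : ℝ, w = a • z + b • y := by
      have := Submodule.mem_span_pair.mp (by rwa [hW] at hw)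
      obtain ⟨a, b, hab⟩ := this
      exact ⟨a, b, hab.symm⟩
    obtain ⟨a, b, rfl⟩ := this
    have hab : a ≠ 0 ∨ b ≠ 0 := by
      by_contra h
      push_neg at h
      simp [h.1, h.2] at hwne
    have hexp : B (a • z + b • y) (a • z + b • y)
        = a ^ 2 * B z z + 2 * (a * b) * B z y + b ^ 2 * B y y := by
      simp only [map_add, map_smul, LinearMap.add_apply, LinearMap.smul_apply,
        smul_eq_mul]
      rw [hsym y z]
      ring
    rw [hexp, hzy]
    rcases hab with ha | hb
    · have h1 : a ^ 2 * B z z < 0 := mul_neg_of_pos_of_neg (by positivity) hz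
      have h2 : b ^ 2 * B y y ≤ 0 :=
        mul_nonpos_of_nonneg_of_nonpos (sq_nonneg b) hneg.le
      nlinarith
    · have h1 : a ^ 2 * B z z ≤ 0 :=
        mul_nonpos_of_nonneg_of_nonpos (sq_nonneg a) hz.le
      have h2 : b ^ 2 * B y y < 0 := mul_neg_of_pos_of_neg (by positivity) hneg
      nlinarith
  have hle := hidx W hWneg
  have hli : LinearIndependent ℝ ![z, y] := by
    rw [LinearIndependent.pair_iff]
    intro a b hab
    have h1 : B z (a • z + b • y) = 0 := by rw [hab]; simp
    simp only [map_add, map_smul, smul_eq_mul] at h1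
    rw [hzy] at h1
    have ha : a = 0 := by
      rcases mul_eq_zero.mp (by linarith : a * B z z = 0) with h | h
      · exact h
      · exact absurd h hz.ne
    have hb : b = 0 := by
      subst ha
      simp only [zero_smul, zero_add] at hab
      rcases smul_eq_zero.mp hab with h | h
      · exact h
      · exact absurd h hy0
    exact ⟨ha, hb⟩
  have h2 : 2 ≤ Module.finrank ℝ (Submodule.span ℝ ({z, y} : Set V)) := by
    have h := finrank_span_eq_card hli
    have hr : Set.range ![z, y] = ({z, y} : Set V) := by
      simp [Matrix.range_cons, Matrix.range_empty, Set.pair_comm]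
    rw [hr] at h
    simp only [Fintype.card_fin] at h
    omega
  exact absurd (le_trans h2 hle) (by norm_num)

/-- On a Lorentzian space the orthogonal complement of a timelike vector is
positive definite. -/
lemma perp_posdef_aux {V : Type*} [AddCommGroup V] [Module ℝ V] [FiniteDimensional ℝ V]
    (B : LinearMap.BilinForm ℝ V) (hB : IsLorentzian B)
    (z : V) (hz : B z z < 0)
    (y : V) (hzy : B z y = 0) (hyy : B y y = 0) : y = 0 := by
  have hsemi := perp_nonneg_aux B hB z hz
  obtain ⟨hnd, hsym, -, -⟩ := hB
  apply hnd.1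
  intro v
  set c : ℝ := B z v / B z z with hc
  set v' : V := v - c • z with hv'
  have hzv' : B z v' = 0 := by
    simp only [hv', map_sub, map_smul, smul_eq_mul]
    rw [hc, div_mul_cancel₀ _ (ne_of_lt hz), sub_self]
  have hyv' : B y v' = 0 := by
    by_contra ha
    set a : ℝ := B y v' with hA
    set d : ℝ := B v' v' with hD
    have hd : 0 ≤ d := hsemi v' hzv'
    have key : ∀ t : ℝ, 0 ≤ 2 * t * a + t ^ 2 * d := by
      intro t
      have hperp : B z (y + t • v') = 0 := by
        simp [map_add, map_smul, hzy, hzv']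
      have := hsemi (y + t • v') hperp
      have hexp : B (y + t • v') (y + t • v')
          = B y y + 2 * t * B y v' + t ^ 2 * B v' v' := by
        simp only [map_add, map_smul, LinearMap.add_apply, LinearMap.smul_apply,
          smul_eq_mul]
        rw [hsym v' y]
        ring
      rw [hexp, hyy] at this
      linarith
    have hapos : 0 < a ^ 2 := by positivity
    rcases eq_or_lt_of_le hd with hd0 | hdpos
    · have := key (-a)
      rw [← hd0] at this
      nlinarith
    · have heq : 2 * (-a / d) * a + (-a / d) ^ 2 * d = -(a ^ 2) / d := by
        field_simp
        ring
      have h3 : 0 ≤ -(a ^ 2) / d := heq ▸ key (-a / d)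
      have h5 : -(a ^ 2) / d < 0 := div_neg_of_neg_of_pos (by linarith) hdpos
      linarith
  have hyz : B y z = 0 := by rw [hsym y z, hzy]
  have : B y v = B y v' + c * B y z := by
    simp only [hv', map_sub, map_smul, smul_eq_mul]
    ring
  rw [this, hyv', hyz]
  ring

/-- If `T` is a `B`-skew-symmetric nilpotent operator on a Lorentzian space with
`T^(m-1) ≠ 0` and `T^m = 0`, then `m ≤ 3`; more precisely, with `k = ⌈m/2⌉`, the image
of `T^k` is totally isotropic and hence has dimension at most 1. -/
theorem stmt8 {V : Type*} [AddCommGroup V] [Module ℝ V] [FiniteDimensional ℝ V]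
    (B : LinearMap.BilinForm ℝ V) (hB : IsLorentzian B)
    (T : V →ₗ[ℝ] V)
    (hskew : ∀ x y : V, B (T x) y = - B x (T y))
    (m : ℕ) (hm : 1 ≤ m)
    (hTm1 : T ^ (m - 1) ≠ 0) (hTm : T ^ m = 0) :
    m ≤ 3 ∧
      (∀ x y : V, B ((T ^ ((m + 1) / 2)) x) ((T ^ ((m + 1) / 2)) y) = 0) ∧
      Module.finrank ℝ (LinearMap.range (T ^ ((m + 1) / 2))) ≤ 1 := by
  set k : ℕ := (m + 1) / 2 with hk
  -- any power at least m of T vanishes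
  have hzero : ∀ n : ℕ, m ≤ n → (T ^ n : V →ₗ[ℝ] V) = 0 := by
    intro n hn
    have : n = (n - m) + m := by omega
    rw [this, pow_add, hTm, mul_zero]
  -- total isotropy of the image of T^k
  have hiso : ∀ x y : V, B ((T ^ k) x) ((T ^ k) y) = 0 := by
    intro x y
    rw [skew_pow_aux B T hskew k x ((T ^ k) y)]
    have : (T ^ k) ((T ^ k) y) = (T ^ (k + k)) y := by
      rw [pow_add, Module.End.mul_apply]
    rw [this, hzero (k + k) (by omega)]
    simp
  -- the image of T^k
  set W : Submodule ℝ V := LinearMap.range (T ^ k) with hWdef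
  have hisoW : ∀ w ∈ W, ∀ w' ∈ W, B w w' = 0 := by
    rintro w ⟨x, rfl⟩ w' ⟨y, rfl⟩
    exact hiso x y
  -- dimension bound via the timelike vector
  obtain ⟨hnd, hsym, ⟨z, hz⟩, hidx⟩ := id hB
  have hinj : Function.Injective ((B.flip z).comp W.subtype) := by
    rw [← LinearMap.ker_eq_bot, LinearMap.ker_eq_bot']
    intro w hw
    have hwz : B (w : V) z = 0 := hw
    have hzw : B z (w : V) = 0 := by rw [hsym z w, hwz]
    have hww : B (w : V) (w : V) = 0 := hisoW w w.2 w w.2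
    have : (w : V) = 0 := perp_posdef_aux B hB z hz w hzw hww
    exact Subtype.ext this
  have hfr : Module.finrank ℝ W ≤ 1 := by
    have := LinearMap.finrank_le_finrank_of_injective hinj
    simpa using this
  -- m ≤ 3
  have hm3 : m ≤ 3 := by
    by_contra hgt
    push_neg at hgt
    -- m ≥ 4, so k ≤ m - 2 < m - 1
    obtain ⟨x, hx⟩ : ∃ x : V, (T ^ (m - 1)) x ≠ 0 := by
      by_contra h
      push_neg at h
      exact hTm1 (LinearMap.ext fun x => h x)
    set u : V := (T ^ k) x with hu
    set v : V := (T ^ (m - 1)) x with hv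
    have hkm : m - 1 - k + k = m - 1 := by omega
    have happ : (T ^ (m - 1 - k)) u = v := by
      rw [hu, ← Module.End.mul_apply, ← pow_add, hkm]
    have happ2 : (T ^ (m - 1 - k)) v = 0 := by
      rw [hv, ← Module.End.mul_apply, ← pow_add,
        hzero ((m - 1 - k) + (m - 1)) (by omega)]
      rfl
    have hli : LinearIndependent ℝ ![u, v] := by
      rw [LinearIndependent.pair_iff]
      intro a b hab
      have h1 : (T ^ (m - 1 - k)) (a • u + b • v) = 0 := by rw [hab]; simp
      rw [map_add, map_smul, map_smul, happ, happ2, smul_zero, add_zero] at h1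
      have ha : a = 0 := by
        rcases smul_eq_zero.mp h1 with h | h
        · exact h
        · exact absurd h hx
      have hb : b = 0 := by
        subst ha
        simp only [zero_smul, zero_add] at hab
        rcases smul_eq_zero.mp hab with h | h
        · exact h
        · exact absurd h hx
      exact ⟨ha, hb⟩
    have hspan : Submodule.span ℝ ({u, v} : Set V) ≤ W := by
      rw [Submodule.span_le]
      rintro w hw
      rcases hw with rfl | rfl
      · exact ⟨x, rfl⟩
      · have hkm2 : k + (m - 1 - k) = m - 1 := by omega
        have : v = (T ^ k) ((T ^ (m - 1 - k)) x) := by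
          rw [← Module.End.mul_apply, ← pow_add, hkm2, hv]
        exact ⟨(T ^ (m - 1 - k)) x, this.symm⟩
    have h2 : 2 ≤ Module.finrank ℝ (Submodule.span ℝ ({u, v} : Set V)) := by
      have h := finrank_span_eq_card hli
      have hr : Set.range ![u, v] = ({u, v} : Set V) := by
        simp [Matrix.range_cons, Matrix.range_empty, Set.pair_comm]
      rw [hr] at h
      simp only [Fintype.card_fin] at h
      omega
    exact absurd (le_trans h2 (le_trans (Submodule.finrank_mono hspan) hfr))
      (by norm_num)
  exact ⟨hm3, hiso, hfr⟩
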